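/- Let E be a Borel equivalence relation on the Cantor space ^ω2 such that whenever η, ν ∈ ^ω2 differ in exactly one coordinate, η and ν are not E-equivalent. Then there is a perfect subset of ^ω2 whose members are pairwise E-inequivalent; in particular E has 2^{ℵ₀} equivalence classes. -/

import Mathlib

open Set Topology Filter Function

namespace Stmt13Aux

abbrev X := ℕ → Bool

def cyl (l : List Bool) : Set X := {x | ∀ k < l.length, x k = l.getD k false}

def res (x : X) (n : ℕ) : List Bool := List.ofFn fun i : Fin n => x i

@[simp] lemma length_res (x : X) (n : ℕ) : (res x n).length = n := by
  simp [res]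

lemma getD_res (x : X) {n k : ℕ} (hk : k < n) : (res x n).getD k false = x k := by
  rw [List.getD_eq_getElem _ _ (by simpa using hk)]
  simp [res]

lemma mem_cyl_res {y x : X} {n : ℕ} : y ∈ cyl (res x n) ↔ ∀ k < n, y k = x k := by
  constructor
  · intro h k hk; rw [h k (by simpa using hk), getD_res x hk]
  · intro h k hk; rw [getD_res x (by simpa using hk)]; exact h k (by simpa using hk)

lemma self_mem_cyl_res (x : X) (n : ℕ) : x ∈ cyl (res x n) :=
  mem_cyl_res.2 fun _ _ => rfl

lemma isOpen_cyl (l : List Bool) : IsOpen (cyl l) := by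
  have : cyl l = ⋂ k ∈ Finset.range l.length, {x : X | x k = l.getD k false} := by
    ext x; simp [cyl]
  rw [this]
  refine isOpen_biInter_finset fun k _ => ?_
  have : {x : X | x k = l.getD k false} = (fun x : X => x k) ⁻¹' {l.getD k false} := rfl
  rw [this]
  exact (isOpen_discrete _).preimage (continuous_apply k)

lemma cyl_nonempty (l : List Bool) : (cyl l).Nonempty :=
  ⟨fun k => l.getD k false, fun _ _ => rfl⟩

lemma getD_prefix {l₁ l₂ : List Bool} (h : l₁ <+: l₂) {k : ℕ} (hk : k < l₁.length) :
    l₂.getD k false = l₁.getD k false := by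
  obtain ⟨t, rfl⟩ := h
  rw [List.getD_eq_getElem _ _ hk, List.getD_eq_getElem _ _
    (lt_of_lt_of_le hk (by simp)), List.getElem_append_left hk]

lemma cyl_anti {l₁ l₂ : List Bool} (h : l₁ <+: l₂) : cyl l₂ ⊆ cyl l₁ := by
  intro x hx k hk
  rw [← getD_prefix h hk]
  exact hx k (lt_of_lt_of_le hk h.length_le)

lemma res_prefix_res (x : X) {m n : ℕ} (h : m ≤ n) : res x m <+: res x n := by
  rw [List.prefix_iff_eq_take]
  refine List.ext_getElem (by simp [h]) fun k h₁ h₂ => ?_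
  simp only [res] at h₁ ⊢
  simp [List.getElem_take]

lemma prefix_res {x : X} {l : List Bool} (h : x ∈ cyl l) {m : ℕ} (hm : l.length ≤ m) :
    l <+: res x m := by
  rw [List.prefix_iff_eq_take]
  refine List.ext_getElem (by simp [hm]) fun k h₁ h₂ => ?_
  have hk : k < l.length := h₁
  have := h k hk
  rw [List.getD_eq_getElem _ _ hk] at this
  rw [List.getElem_take, ← this]
  simp only [res]
  simp [List.getElem_ofFn]

lemma exists_cyl_subset {U : Set X} (hU : IsOpen U) {x : X} (hx : x ∈ U) :
    ∃ n, cyl (res x n) ⊆ U := by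
  obtain ⟨I, u, h1, h2⟩ := isOpen_pi_iff.1 hU x hx
  refine ⟨I.sup (· + 1), fun y hy => h2 ?_⟩
  intro a ha
  have hlt : a < I.sup (· + 1) := Nat.lt_of_lt_of_le (Nat.lt_succ_self a) (Finset.le_sup ha)
  rw [mem_cyl_res.1 hy a hlt]
  exact (h1 a ha).2

lemma exists_cyl_box {W : Set (X × X)} (hW : IsOpen W) {p : X × X} (hp : p ∈ W) :
    ∃ n, cyl (res p.1 n) ×ˢ cyl (res p.2 n) ⊆ W := by
  obtain ⟨u, v, hu, hv, hxu, hyv, huv⟩ := isOpen_prod_iff.1 hW p.1 p.2 hp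
  obtain ⟨n₁, h₁⟩ := exists_cyl_subset hu hxu
  obtain ⟨n₂, h₂⟩ := exists_cyl_subset hv hyv
  refine ⟨max n₁ n₂, fun q hq => huv ⟨?_, ?_⟩⟩
  · exact h₁ (cyl_anti (res_prefix_res _ (le_max_left _ _)) hq.1)
  · exact h₂ (cyl_anti (res_prefix_res _ (le_max_right _ _)) hq.2)


lemma stepA {W : Set (X × X)} (hWo : IsOpen W) (hWd : Dense W) (u v : List Bool) :
    ∃ u' v', u <+: u' ∧ v <+: v' ∧ cyl u' ×ˢ cyl v' ⊆ W := by
  obtain ⟨p, hpW, hpb⟩ := hWd.exists_mem_open ((isOpen_cyl u).prod (isOpen_cyl v))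
    ((cyl_nonempty u).prod (cyl_nonempty v))
  obtain ⟨n, hn⟩ := exists_cyl_box hWo hpW
  refine ⟨res p.1 (max n u.length), res p.2 (max n v.length),
    prefix_res hpb.1 (le_max_right _ _), prefix_res hpb.2 (le_max_right _ _),
    fun q hq => hn ⟨?_, ?_⟩⟩
  · exact cyl_anti (res_prefix_res _ (le_max_left _ _)) hq.1
  · exact cyl_anti (res_prefix_res _ (le_max_left _ _)) hq.2

lemma stepB {W : Set (X × X)} (hWo : IsOpen W) (hWd : Dense W)
    (P : Finset (List Bool × List Bool)) (u : List Bool → List Bool) :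
    ∃ v : List Bool → List Bool, (∀ s, u s <+: v s) ∧
      ∀ p ∈ P, p.1 ≠ p.2 → cyl (v p.1) ×ˢ cyl (v p.2) ⊆ W := by
  classical
  induction P using Finset.induction_on with
  | empty => exact ⟨u, fun s => List.prefix_refl _, by simp⟩
  | @insert p P hnotmem ih =>
    obtain ⟨v, hv1, hv2⟩ := ih
    by_cases hab : p.1 = p.2
    · exact ⟨v, hv1, fun q hq hne => hv2 q (by
        rcases Finset.mem_insert.1 hq with h | h
        · exact absurd (h ▸ hab) hne
        · exact h) hne⟩
    · obtain ⟨a', b', ha', hb', hbox⟩ := stepA hWo hWd (v p.1) (v p.2)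
      set v' : List Bool → List Bool := Function.update (Function.update v p.1 a') p.2 b' with hv'
      have hva : v' p.1 = a' := by
        rw [hv', Function.update_of_ne hab, Function.update_self]
      have hvb : v' p.2 = b' := by rw [hv', Function.update_self]
      have hpre : ∀ s, v s <+: v' s := by
        intro s
        by_cases h2 : s = p.2
        · subst h2; rw [hvb]; exact hb'
        by_cases h1 : s = p.1
        · subst h1; rw [hva]; exact ha'
        · rw [hv', Function.update_of_ne h2, Function.update_of_ne h1]
      refine ⟨v', fun s => (hv1 s).trans (hpre s), fun q hq hne => ?_⟩
      rcases Finset.mem_insert.1 hq with h | h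
      · subst h; rw [hva, hvb]; exact hbox
      · exact fun z hz => hv2 q h hne ⟨cyl_anti (hpre q.1) hz.1, cyl_anti (hpre q.2) hz.2⟩

/-- Mycielski-style free perfect set construction for a countable family of dense open sets. -/
theorem mycielski (W : ℕ → Set (X × X)) (hWo : ∀ n, IsOpen (W n)) (hWd : ∀ n, Dense (W n)) :
    ∃ f : X → X, Continuous f ∧ Function.Injective f ∧
      Perfect (Set.range f) ∧
      ∀ a b : X, a ≠ b → ∀ j, ∃ n, j ≤ n ∧ (f a, f b) ∈ W n := by
  classical
  -- step existence
  have key : ∀ (n : ℕ) (τ : List Bool → List Bool), ∃ τ' : List Bool → List Bool,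
      (∀ s : List Bool, (τ s.dropLast ++ [s.getLastD false]) <+: τ' s) ∧
      ∀ s t : List Bool, s.length = n + 1 → t.length = n + 1 → s ≠ t →
        cyl (τ' s) ×ˢ cyl (τ' t) ⊆ W n := by
    intro n τ
    set S : Finset (List Bool) := (List.finite_length_eq Bool (n+1)).toFinset with hS
    obtain ⟨v, hv1, hv2⟩ := stepB (hWo n) (hWd n) (S ×ˢ S)
      (fun s => τ s.dropLast ++ [s.getLastD false])
    refine ⟨v, hv1, fun s t hs ht hne => ?_⟩
    exact hv2 (s, t) (Finset.mem_product.2 ⟨by simp [hS, hs], by simp [hS, ht]⟩) hne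
  choose F hF1 hF2 using key
  set T : ℕ → List Bool → List Bool :=
    fun n => Nat.rec (fun _ => ([] : List Bool)) (fun n τ => F n τ) n with hT
  set σ : List Bool → List Bool := fun s => T s.length s with hσ
  -- (P1)
  have P1 : ∀ (s : List Bool) (b : Bool), (σ s ++ [b]) <+: σ (s ++ [b]) := by
    intro s b
    have h := hF1 s.length (T s.length) (s ++ [b])
    rw [List.dropLast_concat, List.getLastD_concat] at h
    have hs : σ (s ++ [b]) = F s.length (T s.length) (s ++ [b]) := by
      show T (s ++ [b]).length (s ++ [b]) = _
      rw [List.length_append, List.length_singleton]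
    rw [hs]; exact h
  -- (P2)
  have P2 : ∀ s : List Bool, s.length ≤ (σ s).length := by
    intro s
    induction s using List.reverseRecOn with
    | nil => simp
    | append_singleton s b ih =>
      have h := (P1 s b).length_le
      rw [List.length_append, List.length_singleton] at h ⊢
      omega
  -- (P3)
  have P3 : ∀ (n : ℕ) (s t : List Bool), s.length = n + 1 → t.length = n + 1 → s ≠ t →
      cyl (σ s) ×ˢ cyl (σ t) ⊆ W n := by
    intro n s t hs ht hne
    have h := hF2 n (T n) s t hs ht hne
    have e1 : σ s = F n (T n) s := by show T s.length s = _; rw [hs]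
    have e2 : σ t = F n (T n) t := by show T t.length t = _; rw [ht]
    rw [e1, e2]; exact h
  -- (P4) incomparability
  have P4 : ∀ (n : ℕ) (s t : List Bool), s.length = n → t.length = n → s ≠ t →
      ∃ k, k < (σ s).length ∧ k < (σ t).length ∧ (σ s).getD k false ≠ (σ t).getD k false := by
    intro n
    induction n with
    | zero =>
      intro s t hs ht hne
      exact absurd ((List.length_eq_zero_iff.1 hs).trans (List.length_eq_zero_iff.1 ht).symm) hne
    | succ n ih =>
      intro s t hs ht hne
      have hs0 : s ≠ [] := by intro h; rw [h] at hs; simp at hs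
      have ht0 : t ≠ [] := by intro h; rw [h] at ht; simp at ht
      have hsd : s.dropLast ++ [s.getLast hs0] = s := List.dropLast_append_getLast hs0
      have htd : t.dropLast ++ [t.getLast ht0] = t := List.dropLast_append_getLast ht0
      have hsl : s.dropLast.length = n := by
        rw [List.length_dropLast, hs]; rfl
      have htl : t.dropLast.length = n := by
        rw [List.length_dropLast, ht]; rfl
      have ps : (σ s.dropLast ++ [s.getLast hs0]) <+: σ s := by
        have := P1 s.dropLast (s.getLast hs0); rwa [hsd] at this
      have pt : (σ t.dropLast ++ [t.getLast ht0]) <+: σ t := by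
        have := P1 t.dropLast (t.getLast ht0); rwa [htd] at this
      by_cases hdt : s.dropLast = t.dropLast
      · -- same dropLast, last bits differ
        have hbc : s.getLast hs0 ≠ t.getLast ht0 := by
          intro h
          apply hne
          rw [← hsd, ← htd, hdt, h]
        have hk1 : (σ s.dropLast).length < (σ s.dropLast ++ [s.getLast hs0]).length := by
          rw [List.length_append, List.length_singleton]; omega
        have hk2 : (σ s.dropLast).length < (σ t.dropLast ++ [t.getLast ht0]).length := by
          rw [List.length_append, List.length_singleton, ← hdt]; omega
        refine ⟨(σ s.dropLast).length, lt_of_lt_of_le hk1 ps.length_le,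
          lt_of_lt_of_le hk2 pt.length_le, ?_⟩
        rw [getD_prefix ps hk1, getD_prefix pt hk2]
        rw [List.getD_eq_getElem _ _ hk1, List.getD_eq_getElem _ _ hk2]
        have g1 : (σ s.dropLast ++ [s.getLast hs0])[(σ s.dropLast).length] = s.getLast hs0 :=
          List.getElem_concat_length rfl hk1
        have g2 : (σ t.dropLast ++ [t.getLast ht0])[(σ s.dropLast).length] = t.getLast ht0 :=
          List.getElem_concat_length (by rw [hdt]) hk2
        rw [g1, g2]; exact hbc
      · obtain ⟨k, h1, h2, h3⟩ := ih s.dropLast t.dropLast hsl htl hdt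
        have ps' : σ s.dropLast <+: σ s := (List.prefix_append _ _).trans ps
        have pt' : σ t.dropLast <+: σ t := (List.prefix_append _ _).trans pt
        refine ⟨k, lt_of_lt_of_le h1 ps'.length_le, lt_of_lt_of_le h2 pt'.length_le, ?_⟩
        rw [getD_prefix ps' h1, getD_prefix pt' h2]
        exact h3
  -- restriction sequences
  have resS : ∀ (a : X) (n : ℕ), res a n ++ [a n] = res a (n + 1) := by
    intro a n
    refine List.ext_getElem (by simp) fun i h1 h2 => ?_
    have hrhs : (res a (n + 1))[i] = a i := by simp only [res, List.getElem_ofFn]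
    rw [hrhs]
    rcases Nat.lt_or_ge i n with h | h
    · rw [List.getElem_append_left (by simpa using h)]
      simp [res]
    · have hi : i = n := by
        have : i < n + 1 := by simpa [res] using h2
        omega
      subst hi
      exact List.getElem_concat_length (by simp) h1
  have seqchain : ∀ (a : X) (n : ℕ), σ (res a n) <+: σ (res a (n + 1)) := by
    intro a n
    have h := P1 (res a n) (a n)
    rw [resS a n] at h
    exact (List.prefix_append _ _).trans h
  have seqmono : ∀ (a : X) {m n : ℕ}, m ≤ n → σ (res a m) <+: σ (res a n) := by
    intro a m n h
    induction n, h using Nat.le_induction with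
    | base => exact List.prefix_refl _
    | succ n hmn ih => exact ih.trans (seqchain a n)
  have lenseq : ∀ (a : X) (n : ℕ), n ≤ (σ (res a n)).length := by
    intro a n
    have := P2 (res a n)
    rwa [length_res] at this
  set f : X → X := fun a k => (σ (res a (k + 1))).getD k false with hf
  -- (P6)
  have P6 : ∀ (a : X) (n : ℕ), f a ∈ cyl (σ (res a n)) := by
    intro a n k hk
    show (σ (res a (k + 1))).getD k false = _
    rcases le_total (k + 1) n with h | h
    · exact (getD_prefix (seqmono a h)
        (lt_of_lt_of_le (Nat.lt_succ_self k) (lenseq a (k + 1)))).symm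
    · exact getD_prefix (seqmono a h) hk
  -- continuity
  have hfc : Continuous f := by
    apply continuous_pi
    intro k
    rw [continuous_iff_continuousAt]
    intro a
    have hev : ∀ᶠ a' in 𝓝 a, f a' k = f a k := by
      refine eventually_of_mem
        ((isOpen_cyl (res a (k + 1))).mem_nhds (self_mem_cyl_res a (k + 1))) ?_
      intro a' ha'
      have hr : res a' (k + 1) = res a (k + 1) := by
        refine List.ext_getElem (by simp) fun i h1 h2 => ?_
        simp only [res, List.getElem_ofFn]
        exact mem_cyl_res.1 ha' i (by simpa [res] using h1)
      show (σ (res a' (k + 1))).getD k false = (σ (res a (k + 1))).getD k false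
      rw [hr]
    exact tendsto_const_nhds.congr' (hev.mono fun x hx => hx.symm)
  have resne : ∀ (a b : X) (i n : ℕ), i < n → a i ≠ b i → res a n ≠ res b n := by
    intro a b i n hin hi h
    apply hi
    have h2 := congrArg (fun l => l.getD i false) h
    rwa [getD_res a hin, getD_res b hin] at h2
  -- injectivity
  have hfi : Function.Injective f := by
    intro a b hab
    by_contra hne
    obtain ⟨i, hi⟩ : ∃ i, a i ≠ b i := by
      by_contra h; push_neg at h; exact hne (funext h)
    obtain ⟨k, h1, h2, h3⟩ := P4 (i + 1) (res a (i + 1)) (res b (i + 1)) (by simp) (by simp)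
      (resne a b i (i + 1) (Nat.lt_succ_self i) hi)
    apply h3
    have e1 := P6 a (i + 1) k h1
    have e2 := P6 b (i + 1) k h2
    rw [← e1, ← e2, hab]
  -- perfectness of range
  have hperf : Perfect (Set.range f) := by
    constructor
    · exact (isCompact_range hfc).isClosed
    · intro x hx
      rw [accPt_iff_nhds]
      intro U hU
      obtain ⟨a, rfl⟩ := hx
      obtain ⟨V, hVU, hVo, hxV⟩ := mem_nhds_iff.1 hU
      obtain ⟨K, hK⟩ := exists_cyl_subset hVo hxV
      set a' := Function.update a K (!(a K)) with ha'
      have ha'ne : a' ≠ a := by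
        intro h
        have h2 := congrFun h K
        rw [ha', Function.update_self] at h2
        exact (Bool.not_ne_self (a K)) h2
      have hresK : res a' K = res a K := by
        refine List.ext_getElem (by simp) fun i h1 h2 => ?_
        simp only [res, List.getElem_ofFn]
        have : (i : ℕ) ≠ K := by
          have : (i : ℕ) < K := by simpa [res] using h1
          omega
        rw [ha', Function.update_of_ne this]
      have hagree : ∀ k < K, f a' k = f a k := by
        intro k hk
        have h1 := P6 a' K k (lt_of_lt_of_le hk (lenseq a' K))
        have h2 := P6 a K k (lt_of_lt_of_le hk (lenseq a K))
        rw [hresK] at h1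
        rw [h1]
        exact h2.symm
      refine ⟨f a', ⟨hVU (hK ?_), ⟨a', rfl⟩⟩, fun h => ha'ne (hfi h)⟩
      exact mem_cyl_res.2 fun k hk => hagree k hk
  refine ⟨f, hfc, hfi, hperf, ?_⟩
  -- freeness
  intro a b hne j
  obtain ⟨i, hi⟩ : ∃ i, a i ≠ b i := by
    by_contra h; push_neg at h; exact hne (funext h)
  set m := max j i with hm
  refine ⟨m, le_max_left _ _, ?_⟩
  apply P3 m (res a (m + 1)) (res b (m + 1)) (by simp) (by simp)
    (resne a b i (m + 1) (by omega) hi)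
  exact ⟨P6 a (m + 1), P6 b (m + 1)⟩


lemma isMeagre_union {Y : Type*} [TopologicalSpace Y] {s t : Set Y}
    (hs : IsMeagre s) (ht : IsMeagre t) : IsMeagre (s ∪ t) := by
  rw [IsMeagre, Set.compl_union]
  exact Filter.inter_mem hs ht

/-- The flip-one-coordinate homeomorphism. -/
def flipHomeo (n : ℕ) : X ≃ₜ X where
  toFun x := fun k => if k = n then !(x n) else x k
  invFun x := fun k => if k = n then !(x n) else x k
  left_inv x := by
    funext k
    by_cases h : k = n <;> simp [h]
  right_inv x := by
    funext k
    by_cases h : k = n <;> simp [h]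
  continuous_toFun := by
    apply continuous_pi
    intro k
    by_cases h : k = n
    · subst h
      simp only [if_pos rfl]
      exact (continuous_of_discreteTopology (f := Bool.not)).comp (continuous_apply k)
    · simp only [if_neg h]
      exact continuous_apply k
  continuous_invFun := by
    apply continuous_pi
    intro k
    by_cases h : k = n
    · subst h
      simp only [if_pos rfl]
      exact (continuous_of_discreteTopology (f := Bool.not)).comp (continuous_apply k)
    · simp only [if_neg h]
      exact continuous_apply k

lemma flipHomeo_apply_ne (n k : ℕ) (h : k ≠ n) (x : X) : flipHomeo n x k = x k := by
  simp [flipHomeo, h]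

lemma flipHomeo_apply_self (n : ℕ) (x : X) : flipHomeo n x n = !(x n) := by
  simp [flipHomeo]

section Rel
variable (E : X → X → Prop) (hE : Equivalence E)
  (hBorel : MeasurableSet {p : X × X | E p.1 p.2})
  (hone : ∀ η ν : X, (∃! n : ℕ, η n ≠ ν n) → ¬ E η ν)

include hE hBorel hone in
lemma class_meagre (η : X) : IsMeagre {ν : X | E η ν} := by
  by_contra hnm
  have hcm : MeasurableSet {ν : X | E η ν} :=
    measurable_prodMk_left (x := η) hBorel
  obtain ⟨U, hUo, hUe⟩ := hcm.baireMeasurableSet.residualEq_isOpen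
  have hA : {x : X | x ∈ {ν : X | E η ν} ↔ x ∈ U} ∈ residual X :=
    Filter.eventuallyEq_set.1 hUe
  have hUne : U.Nonempty := by
    rcases Set.eq_empty_or_nonempty U with h | h
    · exfalso
      apply hnm
      rw [IsMeagre]
      refine Filter.mem_of_superset hA fun x hx hxE => ?_
      have := hx.1 hxE
      rw [h] at this
      exact this
    · exact h
  obtain ⟨x₀, hx₀⟩ := hUne
  obtain ⟨n, hn⟩ := exists_cyl_subset hUo hx₀
  have hA2 : (flipHomeo n) ⁻¹' {x : X | x ∈ {ν : X | E η ν} ↔ x ∈ U} ∈ residual X := by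
    rw [← Filter.mem_map, (flipHomeo n).residual_map_eq]
    exact hA
  have hD := dense_of_mem_residual (Filter.inter_mem hA hA2)
  obtain ⟨x, hxD, hxC⟩ := hD.exists_mem_open (isOpen_cyl (res x₀ n)) (cyl_nonempty _)
  have hfxC : flipHomeo n x ∈ cyl (res x₀ n) := by
    refine mem_cyl_res.2 fun k hk => ?_
    rw [flipHomeo_apply_ne n k (by omega) x]
    exact mem_cyl_res.1 hxC k hk
  have hxE : E η x := hxD.1.2 (hn hxC)
  have hfxE : E η (flipHomeo n x) := hxD.2.2 (hn hfxC)
  refine hone x (flipHomeo n x) ⟨n, ?_, ?_⟩ (hE.trans (hE.symm hxE) hfxE)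
  · show x n ≠ flipHomeo n x n
    rw [flipHomeo_apply_self]
    exact (Bool.not_ne_self (x n)).symm
  · intro k hk
    by_contra hkn
    exact hk (flipHomeo_apply_ne n k hkn x).symm

lemma ku_dense_sections {V : Set (X × X)} (hVo : IsOpen V) (hVd : Dense V) :
    {x : X | Dense {y : X | (x, y) ∈ V}} ∈ residual X := by
  have hD : ∀ l : List Bool, {x : X | ∃ y ∈ cyl l, (x, y) ∈ V} ∈ residual X := by
    intro l
    apply residual_of_dense_open
    · have he : {x : X | ∃ y ∈ cyl l, (x, y) ∈ V} = ⋃ y ∈ cyl l, (fun x => (x, y)) ⁻¹' V := by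
        ext x; simp
      rw [he]
      exact isOpen_biUnion fun y _ => hVo.preimage (continuous_id.prodMk continuous_const)
    · rw [dense_iff_inter_open]
      rintro U hU ⟨x, hx⟩
      obtain ⟨p, hpV, hp⟩ := hVd.exists_mem_open (hU.prod (isOpen_cyl l))
        (Set.Nonempty.prod ⟨x, hx⟩ (cyl_nonempty l))
      exact ⟨p.1, hp.1, p.2, hp.2, by simpa using hpV⟩
  have hsub : (⋂ l : List Bool, {x : X | ∃ y ∈ cyl l, (x, y) ∈ V}) ⊆
      {x : X | Dense {y : X | (x, y) ∈ V}} := by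
    intro x hx
    rw [Set.mem_setOf_eq, dense_iff_inter_open]
    rintro U hU ⟨y, hy⟩
    obtain ⟨K, hK⟩ := exists_cyl_subset hU hy
    obtain ⟨y', hy', hyV⟩ := Set.mem_iInter.1 hx (res y K)
    exact ⟨y', hK hy', hyV⟩
  exact Filter.mem_of_superset (countable_iInter_mem.2 hD) hsub

include hE hBorel hone in
lemma E_meagre : IsMeagre {p : X × X | E p.1 p.2} := by
  obtain ⟨U, hUo, hUe⟩ := hBorel.baireMeasurableSet.residualEq_isOpen
  have hA : {p : X × X | p ∈ {q : X × X | E q.1 q.2} ↔ p ∈ U} ∈ residual (X × X) :=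
    Filter.eventuallyEq_set.1 hUe
  have hU : U = ∅ := by
    by_contra hne
    obtain ⟨p₀, hp₀⟩ := Set.nonempty_iff_ne_empty.2 hne
    obtain ⟨n, hbox⟩ := exists_cyl_box hUo hp₀
    obtain ⟨S, hSo, hSd, hSc, hSsub⟩ := mem_residual_iff.1 hA
    have hRR : {x : X | ∀ V ∈ S, Dense {y : X | (x, y) ∈ V}} ∈ residual X := by
      have : {x : X | ∀ V ∈ S, Dense {y : X | (x, y) ∈ V}} =
          ⋂ V ∈ S, {x : X | Dense {y : X | (x, y) ∈ V}} := by
        ext x; simp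
      rw [this]
      exact (countable_bInter_mem hSc).2 fun V hV => ku_dense_sections (hSo V hV) (hSd V hV)
    obtain ⟨x, hxR, hxC⟩ := (dense_of_mem_residual hRR).exists_mem_open
      (isOpen_cyl (res p₀.1 n)) (cyl_nonempty _)
    have hMx : IsMeagre {y : X | ¬ ((x, y) ∈ {q : X × X | E q.1 q.2} ↔ (x, y) ∈ U)} := by
      rw [IsMeagre]
      have hsub2 : (⋂ V ∈ S, {y : X | (x, y) ∈ V}) ⊆
          {y : X | ¬ ((x, y) ∈ {q : X × X | E q.1 q.2} ↔ (x, y) ∈ U)}ᶜ := by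
        intro y hy
        simp only [Set.mem_compl_iff, Set.mem_setOf_eq, not_not]
        exact hSsub fun V hV => Set.mem_iInter₂.1 hy V hV
      refine Filter.mem_of_superset ((countable_bInter_mem hSc).2 fun V hV => ?_) hsub2
      exact residual_of_dense_open
        ((hSo V hV).preimage (continuous_const.prodMk continuous_id)) (hxR V hV)
    have hcl := class_meagre E hE hBorel hone x
    have hsub3 : cyl (res p₀.2 n) ⊆ {ν : X | E x ν} ∪
        {y : X | ¬ ((x, y) ∈ {q : X × X | E q.1 q.2} ↔ (x, y) ∈ U)} := by
      intro y hy
      by_cases hm : (x, y) ∈ {q : X × X | E q.1 q.2} ↔ (x, y) ∈ U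
      · exact Or.inl (hm.2 (hbox ⟨hxC, hy⟩))
      · exact Or.inr hm
    have hcylm : IsMeagre (cyl (res p₀.2 n)) := (isMeagre_union hcl hMx).mono hsub3
    obtain ⟨z, hz1, hz2⟩ := (dense_of_mem_residual hcylm).exists_mem_open
      (isOpen_cyl (res p₀.2 n)) (cyl_nonempty _)
    exact hz1 hz2
  rw [IsMeagre]
  refine Filter.mem_of_superset hA fun p hp hpE => ?_
  have := hp.1 hpE
  rw [hU] at this
  exact this

end Rel

end Stmt13Aux


theorem stmt13 (E : (ℕ → Bool) → (ℕ → Bool) → Prop) (hE : Equivalence E)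
    (hBorel : MeasurableSet {p : (ℕ → Bool) × (ℕ → Bool) | E p.1 p.2})
    (hone : ∀ η ν : ℕ → Bool, (∃! n : ℕ, η n ≠ ν n) → ¬ E η ν) :
    (∃ C : Set (ℕ → Bool), Perfect C ∧ C.Nonempty ∧
      ∀ x ∈ C, ∀ y ∈ C, x ≠ y → ¬ E x y) ∧
    Cardinal.mk {s : Set (ℕ → Bool) | ∃ η, s = {ν | E η ν}} = 2 ^ Cardinal.aleph0 := by
  classical
  open Stmt13Aux in
  have hmeag : IsMeagre {p : (ℕ → Bool) × (ℕ → Bool) | E p.1 p.2} :=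
    Stmt13Aux.E_meagre E hE hBorel hone
  rw [IsMeagre] at hmeag
  obtain ⟨S, hSo, hSd, hSc, hSsub⟩ := mem_residual_iff.1 hmeag
  obtain ⟨g, hg⟩ := (hSc.insert Set.univ).exists_eq_range ⟨Set.univ, Set.mem_insert _ _⟩
  have hgo : ∀ n, IsOpen (g n) ∧ Dense (g n) := by
    intro n
    have : g n ∈ insert Set.univ S := by rw [hg]; exact Set.mem_range_self n
    rcases Set.mem_insert_iff.1 this with h | h
    · rw [h]; exact ⟨isOpen_univ, dense_univ⟩
    · exact ⟨hSo _ h, hSd _ h⟩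
  set W : ℕ → Set ((ℕ → Bool) × (ℕ → Bool)) := fun n => ⋂ k ∈ Finset.range (n + 1), g k
    with hW
  have hWog : ∀ n, IsOpen (W n) ∧ Dense (W n) := by
    intro n
    induction n with
    | zero =>
      have : W 0 = g 0 := by simp [hW]
      rw [this]; exact hgo 0
    | succ n ih =>
      have he : W (n + 1) = g (n + 1) ∩ W n := by
        rw [hW]
        simp only [Finset.range_add_one, Finset.set_biInter_insert]
      rw [he]
      exact ⟨(hgo (n + 1)).1.inter ih.1,
        Dense.inter_of_isOpen_left (hgo (n + 1)).2 ih.2 (hgo (n + 1)).1⟩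
  have hWsub : ∀ k n, k ≤ n → W n ⊆ g k := by
    intro k n hkn
    intro p hp
    exact Set.mem_iInter₂.1 hp k (Finset.mem_range.2 (by omega))
  obtain ⟨f, hfc, hfi, hperf, hfree⟩ :=
    Stmt13Aux.mycielski W (fun n => (hWog n).1) (fun n => (hWog n).2)
  -- the free set
  have hfreeC : ∀ x ∈ Set.range f, ∀ y ∈ Set.range f, x ≠ y → ¬ E x y := by
    rintro x ⟨a, rfl⟩ y ⟨b, rfl⟩ hxy hExy
    have hab : a ≠ b := fun h => hxy (by rw [h])
    have hnot : (f a, f b) ∉ ⋂₀ S := by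
      intro hmem
      exact hSsub hmem hExy
    have hex : ∃ V ∈ S, (f a, f b) ∉ V := by
      by_contra h
      push_neg at h
      exact hnot fun V hV => h V hV
    obtain ⟨V, hVS, hVnot⟩ := hex
    have hVg : ∃ k, V = g k := by
      have : V ∈ insert Set.univ S := Set.mem_insert_iff.2 (Or.inr hVS)
      rw [hg] at this
      obtain ⟨k, hk⟩ := this
      exact ⟨k, hk.symm⟩
    obtain ⟨k, rfl⟩ := hVg
    obtain ⟨n, hkn, hmem⟩ := hfree a b hab k
    exact hVnot (hWsub k n hkn hmem)
  have hne : (Set.range f).Nonempty := ⟨f (fun _ => false), Set.mem_range_self _⟩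
  refine ⟨⟨Set.range f, hperf, hne, hfreeC⟩, ?_⟩
  -- cardinality
  have hcardX : Cardinal.mk (ℕ → Bool) = 2 ^ Cardinal.aleph0 := by
    rw [← Cardinal.mk_bool, ← Cardinal.mk_nat, Cardinal.power_def]
  apply le_antisymm
  · have hsur : Function.Surjective
        (fun η : ℕ → Bool => (⟨{ν | E η ν}, η, rfl⟩ :
          {s : Set (ℕ → Bool) | ∃ η, s = {ν | E η ν}})) := by
      rintro ⟨s, η, rfl⟩
      exact ⟨η, rfl⟩
    calc Cardinal.mk {s : Set (ℕ → Bool) | ∃ η, s = {ν | E η ν}}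
        ≤ Cardinal.mk (ℕ → Bool) := Cardinal.mk_le_of_surjective hsur
      _ = 2 ^ Cardinal.aleph0 := hcardX
  · have hinj : Function.Injective
        (fun a : ℕ → Bool => (⟨{ν | E (f a) ν}, f a, rfl⟩ :
          {s : Set (ℕ → Bool) | ∃ η, s = {ν | E η ν}})) := by
      intro a b hab
      by_contra hne2
      have hset : {ν | E (f a) ν} = {ν | E (f b) ν} := congrArg Subtype.val hab
      have hfa : f a ∈ {ν | E (f b) ν} := by
        rw [← hset]
        exact hE.refl (f a)
      have hEab : E (f a) (f b) := hE.symm hfa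
      exact hfreeC (f a) (Set.mem_range_self a) (f b) (Set.mem_range_self b)
        (fun h => hne2 (hfi h)) hEab
    calc (2 : Cardinal) ^ Cardinal.aleph0 = Cardinal.mk (ℕ → Bool) := hcardX.symm
      _ ≤ Cardinal.mk {s : Set (ℕ → Bool) | ∃ η, s = {ν | E η ν}} :=
          Cardinal.mk_le_of_injective hinj
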